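/- Theorem 5.2(ii) (at most one real eigenvalue). Assume Im V(x) ≥ 0 for almost every x ∈ (0,2π) and Im V(x) > 0 on a set of positive Lebesgue measure. Let λ₁, λ₂ ∈ ℝ with λ₁ ≠ λ₂. Then there do not exist functions f₁, f₂ : [0,2π] → ℂ, each not identically zero and each absolutely continuous with derivative f_j′, such that for j = 1, 2 both equations hold for almost every x ∈ (0,2π): i f_j′(x) + V(x) f_j(x) + f_j(2π) k(x) = λ_j f_j(x) and i f_j′(x) + conj(V(x)) f_j(x) = λ_j f_j(x). -/

import Mathlib

open MeasureTheory Real Complex intervalIntegral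

/-- `f : [0,2π] → ℂ` is absolutely continuous with derivative `f'`:
`f' ∈ L¹(0,2π)` and `f x = f 0 + ∫₀ˣ f'` for all `x ∈ [0,2π]`. -/
def IsACWithDeriv (f f' : ℝ → ℂ) : Prop :=
  MeasureTheory.IntegrableOn f' (Set.Ioc 0 (2 * Real.pi)) ∧
    ∀ x ∈ Set.Icc (0:ℝ) (2 * Real.pi), f x = f 0 + ∫ t in (0:ℝ)..x, f' t

lemma gronwall_zero {a b x₀ C : ℝ} (hab : a ≤ b) (hx₀ : x₀ ∈ Set.Icc a b) (hC : 0 ≤ C)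
    {u : ℝ → ℝ} (hu : ContinuousOn u (Set.Icc a b))
    (hca : ∀ x ∈ Set.Ioo a b, ContinuousAt u x)
    (hnn : ∀ x ∈ Set.Icc a b, 0 ≤ u x)
    (hineq : ∀ x ∈ Set.Icc a b, u x ≤ C * |∫ t in x₀..x, u t|) :
    ∀ x ∈ Set.Icc a b, u x = 0 := by
  have huIcc : Set.uIcc a b = Set.Icc a b := Set.uIcc_of_le hab
  have hint : ∀ x ∈ Set.Icc a b, ∀ y ∈ Set.Icc a b, IntervalIntegrable u volume x y := by
    intro x hx y hy
    exact (hu.mono (Set.uIcc_subset_Icc hx hy)).intervalIntegrable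
  set φ : ℝ → ℝ := fun x => ∫ t in x₀..x, u t with hφ
  have hφ0 : φ x₀ = 0 := integral_same
  have hφcont : ContinuousOn φ (Set.Icc a b) := by
    rw [← huIcc]
    exact continuousOn_primitive_interval'
      (hint a (Set.left_mem_Icc.2 hab) b (Set.right_mem_Icc.2 hab)) (by rw [huIcc]; exact hx₀)
  have hφd : ∀ x ∈ Set.Ioo a b, HasDerivAt φ (u x) x := by
    intro x hx
    exact integral_hasDerivAt_right (hint x₀ hx₀ x (Set.Ioo_subset_Icc_self hx))
      (ContinuousAt.stronglyMeasurableAtFilter isOpen_Ioo hca x hx) (hca x hx)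
  -- key: φ x = 0 for all x
  have hφzero : ∀ x ∈ Set.Icc a b, φ x = 0 := by
    intro x hx
    rcases le_or_gt x₀ x with hle | hlt
    · -- forward direction on [x₀, b]
      have hφnn : ∀ y ∈ Set.Icc x₀ b, 0 ≤ φ y := by
        intro y hy
        apply intervalIntegral.integral_nonneg hy.1
        intro t ht
        exact hnn t ⟨le_trans hx₀.1 ht.1, le_trans ht.2 hy.2⟩
      set ξ : ℝ → ℝ := fun y => φ y * Real.exp (-(C * y)) with hξ
      have hξd : ∀ y ∈ Set.Ioo x₀ b, HasDerivAt ξ ((u y - C * φ y) * Real.exp (-(C * y))) y := by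
        intro y hy
        have hy' : y ∈ Set.Ioo a b := ⟨lt_of_le_of_lt hx₀.1 hy.1, hy.2⟩
        have h1 : HasDerivAt (fun y => Real.exp (-(C * y))) (-C * Real.exp (-(C * y))) y := by
          have := (Real.hasDerivAt_exp (-(C * y))).comp y
            (((hasDerivAt_id y).const_mul C).neg)
          simpa [mul_comm, Function.comp_def] using this
        have := (hφd y hy').mul h1
        exact this.congr_deriv (by ring)
      have hanti : AntitoneOn ξ (Set.Icc x₀ b) := by
        apply antitoneOn_of_deriv_nonpos (convex_Icc _ _)
        · exact (hφcont.mono (Set.Icc_subset_Icc hx₀.1 le_rfl)).mul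
            (Real.continuous_exp.comp (continuous_const.mul continuous_id).neg).continuousOn
        · intro y hy
          rw [interior_Icc] at hy
          exact (hξd y hy).differentiableAt.differentiableWithinAt
        · intro y hy
          rw [interior_Icc] at hy
          rw [(hξd y hy).deriv]
          have hyI : y ∈ Set.Icc a b := ⟨le_trans hx₀.1 hy.1.le, hy.2.le⟩
          have h2 : u y ≤ C * φ y := by
            have := hineq y hyI
            rwa [_root_.abs_of_nonneg (hφnn y (Set.Ioo_subset_Icc_self hy))] at this
          have : u y - C * φ y ≤ 0 := by linarith
          exact mul_nonpos_of_nonpos_of_nonneg this (Real.exp_nonneg _)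
      have hxmem : x ∈ Set.Icc x₀ b := ⟨hle, hx.2⟩
      have hξle : φ x * Real.exp (-(C * x)) ≤ 0 := by
        have h3 := hanti (Set.left_mem_Icc.2 (le_trans hle hx.2)) hxmem hle
        have hξx₀ : ξ x₀ = 0 := by simp [hξ, hφ0]
        rw [hξx₀] at h3
        exact h3
      have hφx : φ x ≤ 0 := by
        by_contra hpos
        push_neg at hpos
        have := mul_pos hpos (Real.exp_pos (-(C * x)))
        linarith [hξle]
      exact le_antisymm hφx (hφnn x hxmem)
    · -- backward direction on [a, x₀]
      set η : ℝ → ℝ := fun y => -φ y with hη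
      have hηnn : ∀ y ∈ Set.Icc a x₀, 0 ≤ η y := by
        intro y hy
        have : φ y ≤ 0 := by
          have h4 : φ y = -∫ t in y..x₀, u t := intervalIntegral.integral_symm y x₀
          rw [h4, neg_nonpos]
          apply intervalIntegral.integral_nonneg hy.2
          intro t ht
          exact hnn t ⟨le_trans hy.1 ht.1, le_trans ht.2 hx₀.2⟩
        simpa [hη] using this
      set ζ : ℝ → ℝ := fun y => η y * Real.exp (C * y) with hζ
      have hζd : ∀ y ∈ Set.Ioo a x₀, HasDerivAt ζ ((-u y + C * η y) * Real.exp (C * y)) y := by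
        intro y hy
        have hy' : y ∈ Set.Ioo a b := ⟨hy.1, lt_of_lt_of_le hy.2 hx₀.2⟩
        have h1 : HasDerivAt (fun y => Real.exp (C * y)) (C * Real.exp (C * y)) y := by
          have := (Real.hasDerivAt_exp (C * y)).comp y ((hasDerivAt_id y).const_mul C)
          simpa [mul_comm, Function.comp_def] using this
        have := ((hφd y hy').neg).mul h1
        exact this.congr_deriv (by simp only [hη, Pi.neg_apply]; ring)
      have hmono : MonotoneOn ζ (Set.Icc a x₀) := by
        apply monotoneOn_of_deriv_nonneg (convex_Icc _ _)
        · exact ((hφcont.mono (Set.Icc_subset_Icc le_rfl hx₀.2)).neg).mul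
            (Real.continuous_exp.comp (continuous_const.mul continuous_id)).continuousOn
        · intro y hy
          rw [interior_Icc] at hy
          exact (hζd y hy).differentiableAt.differentiableWithinAt
        · intro y hy
          rw [interior_Icc] at hy
          rw [(hζd y hy).deriv]
          have hyI : y ∈ Set.Icc a b := ⟨hy.1.le, le_trans hy.2.le hx₀.2⟩
          have h2 : u y ≤ C * η y := by
            have h5 := hineq y hyI
            have h6 : |∫ t in x₀..y, u t| = η y := by
              have h7 : (∫ t in x₀..y, u t) = -η y := by simp [hη, hφ]
              rw [h7, abs_neg, _root_.abs_of_nonneg (hηnn y (Set.Ioo_subset_Icc_self hy))]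
            rwa [h6] at h5
          have : 0 ≤ -u y + C * η y := by linarith
          exact mul_nonneg this (Real.exp_nonneg _)
      have hxmem : x ∈ Set.Icc a x₀ := ⟨hx.1, hlt.le⟩
      have hζle : η x * Real.exp (C * x) ≤ 0 := by
        have h3 := hmono hxmem (Set.right_mem_Icc.2 (le_trans hx.1 hlt.le)) hlt.le
        have hζx₀ : ζ x₀ = 0 := by simp [hζ, hη, hφ0]
        rw [hζx₀] at h3
        exact h3
      have hηx : η x ≤ 0 := by
        by_contra hpos
        push_neg at hpos
        have := mul_pos hpos (Real.exp_pos (C * x))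
        linarith [hζle]
      have : η x = 0 := le_antisymm hηx (hηnn x hxmem)
      simpa [hη, neg_eq_zero] using this
  intro x hx
  have h := hineq x hx
  have h2 : (∫ t in x₀..x, u t) = 0 := hφzero x hx
  rw [h2] at h
  simp at h
  exact le_antisymm h (hnn x hx)


lemma hab2pi : (0:ℝ) ≤ 2 * Real.pi := by positivity

lemma intervalIntegrable_of_ac {f f' : ℝ → ℂ} (hf : IsACWithDeriv f f') {x y : ℝ}
    (hx : x ∈ Set.Icc (0:ℝ) (2*Real.pi)) (hy : y ∈ Set.Icc (0:ℝ) (2*Real.pi)) :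
    IntervalIntegrable f' volume x y := by
  rw [intervalIntegrable_iff]
  exact hf.1.mono_set (fun t ht => ⟨lt_of_le_of_lt (le_min hx.1 hy.1) ht.1,
    le_trans ht.2 (max_le hx.2 hy.2)⟩)

lemma continuousOn_of_ac {f f' : ℝ → ℂ} (hf : IsACWithDeriv f f') :
    ContinuousOn f (Set.Icc 0 (2*Real.pi)) := by
  have h : ContinuousOn (fun x => f 0 + ∫ t in (0:ℝ)..x, f' t) (Set.Icc 0 (2*Real.pi)) := by
    apply ContinuousOn.add continuousOn_const
    rw [← Set.uIcc_of_le hab2pi]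
    exact intervalIntegral.continuousOn_primitive_interval'
      (intervalIntegrable_of_ac hf (Set.left_mem_Icc.2 hab2pi) (Set.right_mem_Icc.2 hab2pi))
      (by rw [Set.uIcc_of_le hab2pi]; exact Set.left_mem_Icc.2 hab2pi)
  exact h.congr hf.2

lemma continuousAt_of_ac {f f' : ℝ → ℂ} (hf : IsACWithDeriv f f') {x : ℝ}
    (hx : x ∈ Set.Ioo (0:ℝ) (2*Real.pi)) : ContinuousAt f x := by
  have hmem : Set.Icc (0:ℝ) (2*Real.pi) ∈ nhds x := Icc_mem_nhds hx.1 hx.2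
  have h := (continuousOn_of_ac hf).continuousAt hmem
  exact h

lemma sub_eq_integral_of_ac {f f' : ℝ → ℂ} (hf : IsACWithDeriv f f') {x y : ℝ}
    (hx : x ∈ Set.Icc (0:ℝ) (2*Real.pi)) (hy : y ∈ Set.Icc (0:ℝ) (2*Real.pi)) :
    f x - f y = ∫ t in y..x, f' t := by
  rw [hf.2 x hx, hf.2 y hy]
  have := intervalIntegral.integral_interval_sub_left
    (intervalIntegrable_of_ac hf (Set.left_mem_Icc.2 hab2pi) hx)
    (intervalIntegrable_of_ac hf (Set.left_mem_Icc.2 hab2pi) hy)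
  rw [← this]
  ring

lemma ode_zero {f f' : ℝ → ℂ} (hf : IsACWithDeriv f f') {C : ℝ} (hC : 0 ≤ C)
    (hbd : ∀ᵐ x ∂(volume.restrict (Set.Ioo 0 (2*Real.pi))), ‖f' x‖ ≤ C * ‖f x‖)
    {x₀ : ℝ} (hx₀ : x₀ ∈ Set.Icc 0 (2*Real.pi)) (h0 : f x₀ = 0) :
    ∀ x ∈ Set.Icc (0:ℝ) (2*Real.pi), f x = 0 := by
  have hfc := continuousOn_of_ac hf
  -- a.e. bound on all of ℝ restricted to any subinterval of [0,2π]
  have hbd' : ∀ᵐ t ∂volume, t ∈ Set.Ioo (0:ℝ) (2*Real.pi) → ‖f' t‖ ≤ C * ‖f t‖ :=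
    ae_imp_of_ae_restrict hbd
  have key : ∀ x ∈ Set.Icc (0:ℝ) (2*Real.pi), ‖f x‖ = 0 := by
    apply gronwall_zero hab2pi hx₀ hC
    · exact hfc.norm
    · exact fun x hx => (continuousAt_of_ac hf hx).norm
    · exact fun x _ => norm_nonneg _
    · intro x hx
      have h1 : f x = ∫ t in x₀..x, f' t := by
        have := sub_eq_integral_of_ac hf hx hx₀
        rw [h0] at this; simpa using this
      have h2 : ‖f x‖ ≤ |∫ t in x₀..x, ‖f' t‖| := by
        rw [h1]
        exact intervalIntegral.norm_integral_le_abs_integral_norm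
      have h3 : |∫ t in x₀..x, ‖f' t‖| ≤ C * |∫ t in x₀..x, ‖f t‖| := by
        have hae : ∀ᵐ t ∂volume, t ∈ Set.uIcc x₀ x → ‖f' t‖ ≤ C * ‖f t‖ := by
          have hnull : volume {t | t ∈ Set.uIcc x₀ x ∧ t ∉ Set.Ioo (0:ℝ) (2*Real.pi)} = 0 := by
            have hsub : {t | t ∈ Set.uIcc x₀ x ∧ t ∉ Set.Ioo (0:ℝ) (2*Real.pi)}
                ⊆ ({0, 2*Real.pi} : Set ℝ) := by
              intro t ht
              rcases ht with ⟨ht1, ht2⟩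
              have htI : t ∈ Set.Icc (0:ℝ) (2*Real.pi) := Set.uIcc_subset_Icc hx₀ hx ht1
              simp only [Set.mem_Ioo, not_and_or, not_lt] at ht2
              simp only [Set.mem_insert_iff, Set.mem_singleton_iff]
              rcases ht2 with h | h
              · exact Or.inl (le_antisymm h htI.1)
              · exact Or.inr (le_antisymm htI.2 h)
            exact measure_mono_null hsub
              (((Set.finite_singleton _).insert _).measure_zero _)
          have h5 : ∀ᵐ t ∂volume, t ∈ Set.uIcc x₀ x → t ∈ Set.Ioo (0:ℝ) (2*Real.pi) := by
            rw [MeasureTheory.ae_iff]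
            apply measure_mono_null _ hnull
            intro t ht
            simp only [Set.mem_setOf_eq] at ht ⊢
            push_neg at ht
            exact ht
          filter_upwards [hbd', h5] with t h6 h7 h8
          exact h6 (h7 h8)
        have hintf' : IntervalIntegrable (fun t => ‖f' t‖) volume x₀ x :=
          (intervalIntegrable_of_ac hf hx₀ hx).norm
        have hintf : IntervalIntegrable (fun t => C * ‖f t‖) volume x₀ x :=
          (((hfc.norm).mono (Set.uIcc_subset_Icc hx₀ hx)).intervalIntegrable).const_mul C
        rcases le_or_gt x₀ x with hle | hlt
        · have hle' : (fun t => ‖f' t‖) ≤ᵐ[volume.restrict (Set.Icc x₀ x)] fun t => C * ‖f t‖ := by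
            filter_upwards [MeasureTheory.ae_restrict_of_ae hae,
              MeasureTheory.ae_restrict_mem measurableSet_Icc] with t h1 h2
            exact h1 (by rw [Set.uIcc_of_le hle]; exact h2)
          have hmono := intervalIntegral.integral_mono_ae_restrict hle hintf' hintf hle'
          have hnn1 : 0 ≤ ∫ t in x₀..x, ‖f' t‖ :=
            intervalIntegral.integral_nonneg hle (fun t _ => norm_nonneg _)
          have hnn2 : 0 ≤ ∫ t in x₀..x, ‖f t‖ :=
            intervalIntegral.integral_nonneg hle (fun t _ => norm_nonneg _)
          calc |∫ t in x₀..x, ‖f' t‖| = ∫ t in x₀..x, ‖f' t‖ := _root_.abs_of_nonneg hnn1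
            _ ≤ ∫ t in x₀..x, C * ‖f t‖ := hmono
            _ = C * ∫ t in x₀..x, ‖f t‖ := by rw [intervalIntegral.integral_const_mul]
            _ ≤ C * |∫ t in x₀..x, ‖f t‖| := by
                rw [_root_.abs_of_nonneg hnn2]
        · rw [intervalIntegral.integral_symm x x₀, abs_neg,
            intervalIntegral.integral_symm x x₀, abs_neg]
          have hge : x ≤ x₀ := hlt.le
          have hle' : (fun t => ‖f' t‖) ≤ᵐ[volume.restrict (Set.Icc x x₀)] fun t => C * ‖f t‖ := by
            filter_upwards [MeasureTheory.ae_restrict_of_ae hae,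
              MeasureTheory.ae_restrict_mem measurableSet_Icc] with t h1 h2
            exact h1 (by rw [Set.uIcc_of_ge hge]; exact h2)
          have hmono := intervalIntegral.integral_mono_ae_restrict hge hintf'.symm
            hintf.symm hle'
          have hnn1 : 0 ≤ ∫ t in x..x₀, ‖f' t‖ :=
            intervalIntegral.integral_nonneg hge (fun t _ => norm_nonneg _)
          have hnn2 : 0 ≤ ∫ t in x..x₀, ‖f t‖ :=
            intervalIntegral.integral_nonneg hge (fun t _ => norm_nonneg _)
          calc |∫ t in x..x₀, ‖f' t‖| = ∫ t in x..x₀, ‖f' t‖ := _root_.abs_of_nonneg hnn1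
            _ ≤ ∫ t in x..x₀, C * ‖f t‖ := hmono
            _ = C * ∫ t in x..x₀, ‖f t‖ := by rw [intervalIntegral.integral_const_mul]
            _ ≤ C * |∫ t in x..x₀, ‖f t‖| := by
                rw [_root_.abs_of_nonneg hnn2]
      have : ‖f x‖ ≤ C * |∫ t in x₀..x, ‖f t‖| := le_trans h2 h3
      exact this
  intro x hx
  simpa using key x hx

lemma isAC_mul_exp {f f' : ℝ → ℂ} (hf : IsACWithDeriv f f') (c : ℂ) :
    IsACWithDeriv (fun x => f x * Complex.exp (c * x))
      (fun x => f' x * Complex.exp (c * x) + f x * (c * Complex.exp (c * x))) := by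
  set g : ℝ → ℂ := fun t => Complex.exp (c * t) with hg
  have hgd : ∀ t : ℝ, HasDerivAt (fun u : ℝ => g u) (c * g t) t := by
    intro t
    have h1 : HasDerivAt (fun u : ℝ => c * (u:ℂ)) c t := by
      simpa using (Complex.ofRealCLM.hasDerivAt (x := t)).const_mul c
    simpa [hg, mul_comm, Function.comp_def] using (Complex.hasDerivAt_exp (c * t)).comp t h1
  have hgc : Continuous g := by
    have : Continuous fun t : ℝ => c * (t:ℂ) := by continuity
    exact Complex.continuous_exp.comp this
  have hfc := continuousOn_of_ac hf
  have hbound : ∀ᵐ t ∂(volume.restrict (Set.Ioc 0 (2*Real.pi))),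
      ‖g t‖ ≤ Real.exp (‖c‖ * (2*Real.pi)) := by
    filter_upwards [MeasureTheory.ae_restrict_mem measurableSet_Ioc] with t ht
    rw [hg]
    rw [Complex.norm_exp]
    apply Real.exp_le_exp.2
    calc (c * (t:ℂ)).re ≤ ‖c * (t:ℂ)‖ := Complex.re_le_norm _
      _ = ‖c‖ * |t| := by rw [norm_mul]; simp [Complex.norm_real, abs_of_pos ht.1]
      _ ≤ ‖c‖ * (2*Real.pi) := by
          apply mul_le_mul_of_nonneg_left _ (norm_nonneg c)
          rw [abs_of_pos ht.1]; exact ht.2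
  constructor
  · apply MeasureTheory.Integrable.add
    · have := MeasureTheory.Integrable.bdd_mul (f := g) (g := f') hf.1
        hgc.aestronglyMeasurable hbound
      exact this.congr (Filter.Eventually.of_forall (fun t => mul_comm (g t) (f' t)))
    · exact ((hfc.mul ((continuous_const.mul hgc).continuousOn)).integrableOn_Icc).mono_set
        Set.Ioc_subset_Icc_self
  · intro x hx
    have hx0 : (0:ℝ) ≤ x := hx.1
    have huIcc : Set.uIcc (0:ℝ) x = Set.Icc 0 x := Set.uIcc_of_le hx0
    have hsubJ : Set.Ioc (0:ℝ) x ⊆ Set.Ioc 0 (2*Real.pi) := Set.Ioc_subset_Ioc le_rfl hx.2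
    have hIccsub : Set.Icc (0:ℝ) x ⊆ Set.Icc 0 (2*Real.pi) := Set.Icc_subset_Icc le_rfl hx.2
    have hf'x : MeasureTheory.IntegrableOn f' (Set.Ioc 0 x) := hf.1.mono_set hsubJ
    have hf'i : IntervalIntegrable f' volume 0 x :=
      (intervalIntegrable_iff_integrableOn_Ioc_of_le hx0).2 hf'x
    have hgint : MeasureTheory.IntegrableOn (fun t => c * g t) (Set.Ioc 0 x) :=
      ((continuous_const.mul hgc).integrableOn_Icc).mono_set Set.Ioc_subset_Icc_self
    have hgi : IntervalIntegrable (fun t => c * g t) volume 0 x :=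
      (continuous_const.mul hgc).intervalIntegrable 0 x
    -- FTC for g
    have hgftc : ∀ y z : ℝ, y ≤ z → (∫ t in y..z, c * g t) = g z - g y := by
      intro y z _
      exact intervalIntegral.integral_eq_sub_of_hasDerivAt (fun t _ => by simpa using hgd t)
        ((continuous_const.mul hgc).intervalIntegrable y z)
    set P : ℝ → ℂ := fun t => ∫ s in (0:ℝ)..t, f' s with hP
    have hPcont : ContinuousOn P (Set.Icc 0 (2*Real.pi)) := by
      rw [← Set.uIcc_of_le hab2pi]
      exact intervalIntegral.continuousOn_primitive_interval'
        (intervalIntegrable_of_ac hf (Set.left_mem_Icc.2 hab2pi) (Set.right_mem_Icc.2 hab2pi))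
        (by rw [Set.uIcc_of_le hab2pi]; exact Set.left_mem_Icc.2 hab2pi)
    -- Fubini step
    have hkey : (∫ t in (0:ℝ)..x, P t * (c * g t)) = ∫ s in (0:ℝ)..x, f' s * (g x - g s) := by
      rw [intervalIntegral.integral_of_le hx0, intervalIntegral.integral_of_le hx0]
      set S : Set (ℝ × ℝ) := {p : ℝ × ℝ | p.2 ≤ p.1} with hS
      have hSm : MeasurableSet S := measurableSet_le measurable_snd measurable_fst
      set K : ℝ × ℝ → ℂ := S.indicator (fun p => (c * g p.1) * f' p.2) with hK
      have hKint : MeasureTheory.Integrable K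
          ((volume.restrict (Set.Ioc 0 x)).prod (volume.restrict (Set.Ioc 0 x))) :=
        MeasureTheory.Integrable.indicator (MeasureTheory.Integrable.mul_prod hgint hf'x) hSm
      have hL : ∀ t ∈ Set.Ioc (0:ℝ) x,
          (∫ s in Set.Ioc (0:ℝ) x, K (t, s)) = P t * (c * g t) := by
        intro t ht
        have he : (fun s => K (t, s)) = (Set.Iic t).indicator (fun s => (c * g t) * f' s) := by
          funext s
          simp only [hK, Set.indicator, hS, Set.mem_setOf_eq, Set.mem_Iic]
        rw [he, MeasureTheory.integral_indicator measurableSet_Iic,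
          MeasureTheory.Measure.restrict_restrict measurableSet_Iic]
        have hIS : Set.Iic t ∩ Set.Ioc 0 x = Set.Ioc 0 t := by
          rw [Set.inter_comm, Set.Ioc_inter_Iic, min_eq_right ht.2]
        rw [hIS, MeasureTheory.integral_const_mul]
        simp only [hP]
        rw [intervalIntegral.integral_of_le ht.1.le]
        ring
      have hR : ∀ s ∈ Set.Ioc (0:ℝ) x,
          (∫ t in Set.Ioc (0:ℝ) x, K (t, s)) = f' s * (g x - g s) := by
        intro s hs
        have he : (fun t => K (t, s)) = (Set.Ici s).indicator (fun t => (c * g t) * f' s) := by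
          funext t
          simp only [hK, Set.indicator, hS, Set.mem_setOf_eq, Set.mem_Ici]
        rw [he, MeasureTheory.integral_indicator measurableSet_Ici,
          MeasureTheory.Measure.restrict_restrict measurableSet_Ici]
        have hIS : Set.Ici s ∩ Set.Ioc 0 x = Set.Icc s x := by
          ext t
          simp only [Set.mem_inter_iff, Set.mem_Ici, Set.mem_Ioc, Set.mem_Icc]
          constructor
          · rintro ⟨h1, _, h3⟩; exact ⟨h1, h3⟩
          · rintro ⟨h1, h2⟩; exact ⟨h1, lt_of_lt_of_le hs.1 h1, h2⟩
        rw [hIS, MeasureTheory.integral_Icc_eq_integral_Ioc, MeasureTheory.integral_mul_const,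
          ← intervalIntegral.integral_of_le hs.2, hgftc s x hs.2]
        ring
      calc (∫ t in Set.Ioc (0:ℝ) x, P t * (c * g t))
          = ∫ t in Set.Ioc (0:ℝ) x, ∫ s in Set.Ioc (0:ℝ) x, K (t, s) :=
            (MeasureTheory.setIntegral_congr_fun measurableSet_Ioc (fun t ht => (hL t ht).symm))
        _ = ∫ s in Set.Ioc (0:ℝ) x, ∫ t in Set.Ioc (0:ℝ) x, K (t, s) :=
            MeasureTheory.integral_integral_swap hKint
        _ = ∫ s in Set.Ioc (0:ℝ) x, f' s * (g x - g s) :=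
            MeasureTheory.setIntegral_congr_fun measurableSet_Ioc (fun s hs => hR s hs)
    -- integrability of pieces over 0..x
    have hA' : IntervalIntegrable (fun t => f' t * g t) volume 0 (2*Real.pi) := by
      rw [intervalIntegrable_iff_integrableOn_Ioc_of_le hab2pi]
      have := MeasureTheory.Integrable.bdd_mul (f := g) (g := f') hf.1
        hgc.aestronglyMeasurable hbound
      exact this.congr (Filter.Eventually.of_forall (fun t => mul_comm (g t) (f' t)))
    have hA : IntervalIntegrable (fun t => f' t * g t) volume 0 x :=
      hA'.mono_set (by rw [huIcc, Set.uIcc_of_le hab2pi]; exact hIccsub)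
    have hB2 : IntervalIntegrable (fun t => f t * (c * g t)) volume 0 x := by
      rw [intervalIntegrable_iff_integrableOn_Ioc_of_le hx0]
      exact (((hfc.mono hIccsub).mul
        ((continuous_const.mul hgc).continuousOn)).integrableOn_Icc).mono_set
        Set.Ioc_subset_Icc_self
    have hPgi : IntervalIntegrable (fun t => P t * (c * g t)) volume 0 x := by
      rw [intervalIntegrable_iff_integrableOn_Ioc_of_le hx0]
      exact (((hPcont.mono hIccsub).mul
        ((continuous_const.mul hgc).continuousOn)).integrableOn_Icc).mono_set
        Set.Ioc_subset_Icc_self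
    -- rewrite B
    have hBeq : (∫ t in (0:ℝ)..x, f t * (c * g t))
        = f 0 * (g x - g 0) + ∫ t in (0:ℝ)..x, P t * (c * g t) := by
      have hcongr : (∫ t in (0:ℝ)..x, f t * (c * g t))
          = ∫ t in (0:ℝ)..x, (f 0 * (c * g t) + P t * (c * g t)) := by
        apply intervalIntegral.integral_congr
        intro t ht
        rw [huIcc] at ht
        show f t * (c * g t) = f 0 * (c * g t) + P t * (c * g t)
        rw [hf.2 t (hIccsub ht)]
        simp only [hP]
        ring
      rw [hcongr, intervalIntegral.integral_add (hgi.const_mul (f 0)) hPgi,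
        intervalIntegral.integral_const_mul, hgftc 0 x hx0]
    -- rewrite the triangle term
    have htri : (∫ s in (0:ℝ)..x, f' s * (g x - g s))
        = g x * P x - ∫ t in (0:ℝ)..x, f' t * g t := by
      have hcongr : (∫ s in (0:ℝ)..x, f' s * (g x - g s))
          = ∫ s in (0:ℝ)..x, (f' s * g x - f' s * g s) := by
        apply intervalIntegral.integral_congr
        intro t _
        show f' t * (g x - g t) = f' t * g x - f' t * g t
        ring
      rw [hcongr, intervalIntegral.integral_sub (hf'i.mul_const (g x)) hA,
        intervalIntegral.integral_mul_const, hP]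
      ring
    show f x * g x = f 0 * g 0 + ∫ t in (0:ℝ)..x,
      (f' t * g t + f t * (c * g t))
    rw [intervalIntegral.integral_add hA hB2, hBeq, hkey, htri, hf.2 x hx]
    show (f 0 + P x) * g x = _
    ring



lemma isAC_smul_sub {f f' g g' : ℝ → ℂ} (hf : IsACWithDeriv f f') (hg : IsACWithDeriv g g')
    (a b : ℂ) :
    IsACWithDeriv (fun x => a * f x - b * g x) (fun x => a * f' x - b * g' x) := by
  constructor
  · exact (hf.1.const_mul a).sub (hg.1.const_mul b)
  · intro x hx
    have h0 : (0:ℝ) ∈ Set.Icc (0:ℝ) (2*Real.pi) := Set.left_mem_Icc.2 hab2pi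
    rw [intervalIntegral.integral_sub ((intervalIntegrable_of_ac hf h0 hx).const_mul a)
        ((intervalIntegrable_of_ac hg h0 hx).const_mul b),
      intervalIntegral.integral_const_mul, intervalIntegral.integral_const_mul]
    show a * f x - b * g x = a * f 0 - b * g 0 + _
    rw [hf.2 x hx, hg.2 x hx]
    ring

/-- Theorem 5.2(ii) (at most one real eigenvalue): if `Im V ≥ 0` a.e. and `Im V > 0` on a
set of positive measure, then for distinct reals `λ₁ ≠ λ₂` there are no nonzero functions
`f₁, f₂` satisfying simultaneously `i f_j' + V f_j + f_j(2π)k = λ_j f_j` and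
`i f_j' + conj(V) f_j = λ_j f_j` a.e. on `(0,2π)`. -/
theorem at_most_one_real_eigenvalue
    (V k : ℝ → ℂ)
    (hV : MeasureTheory.MemLp V ⊤ (MeasureTheory.volume.restrict (Set.Ioo 0 (2 * Real.pi))))
    (hk : MeasureTheory.MemLp k 2 (MeasureTheory.volume.restrict (Set.Ioo 0 (2 * Real.pi))))
    (hVI : ∀ᵐ x ∂(MeasureTheory.volume.restrict (Set.Ioo 0 (2 * Real.pi))), 0 ≤ (V x).im)
    (hVIpos : 0 < MeasureTheory.volume {x ∈ Set.Ioo (0:ℝ) (2 * Real.pi) | 0 < (V x).im})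
    (lam₁ lam₂ : ℝ) (hne : lam₁ ≠ lam₂) :
    ¬ ∃ f₁ f₁' f₂ f₂' : ℝ → ℂ,
      IsACWithDeriv f₁ f₁' ∧ (∃ x ∈ Set.Icc (0:ℝ) (2 * Real.pi), f₁ x ≠ 0) ∧
      IsACWithDeriv f₂ f₂' ∧ (∃ x ∈ Set.Icc (0:ℝ) (2 * Real.pi), f₂ x ≠ 0) ∧
      (∀ᵐ x ∂(MeasureTheory.volume.restrict (Set.Ioo 0 (2 * Real.pi))),
        Complex.I * f₁' x + V x * f₁ x + f₁ (2 * Real.pi) * k x = (lam₁ : ℂ) * f₁ x) ∧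
      (∀ᵐ x ∂(MeasureTheory.volume.restrict (Set.Ioo 0 (2 * Real.pi))),
        Complex.I * f₁' x + (starRingEnd ℂ) (V x) * f₁ x = (lam₁ : ℂ) * f₁ x) ∧
      (∀ᵐ x ∂(MeasureTheory.volume.restrict (Set.Ioo 0 (2 * Real.pi))),
        Complex.I * f₂' x + V x * f₂ x + f₂ (2 * Real.pi) * k x = (lam₂ : ℂ) * f₂ x) ∧
      (∀ᵐ x ∂(MeasureTheory.volume.restrict (Set.Ioo 0 (2 * Real.pi))),
        Complex.I * f₂' x + (starRingEnd ℂ) (V x) * f₂ x = (lam₂ : ℂ) * f₂ x) := by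
  
  rintro ⟨f₁, f₁', f₂, f₂', hAC₁, hnz₁, hAC₂, hnz₂, heq₁, hadj₁, heq₂, hadj₂⟩
  set μr := MeasureTheory.volume.restrict (Set.Ioo 0 (2 * Real.pi)) with hμr
  -- essential bound for V
  set M : ℝ := (MeasureTheory.eLpNormEssSup V μr).toReal with hMdef
  have hVtop : MeasureTheory.eLpNormEssSup V μr < ⊤ := by
    have := hV.2
    rwa [MeasureTheory.eLpNorm_exponent_top] at this
  have hM : ∀ᵐ x ∂μr, ‖V x‖ ≤ M := by
    filter_upwards [MeasureTheory.enorm_ae_le_eLpNormEssSup V μr] with x hx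
    have := ENNReal.toReal_mono hVtop.ne hx
    simpa [hMdef] using this
  have hM0 : 0 ≤ M := ENNReal.toReal_nonneg
  set C : ℝ := M + |lam₁| + |lam₂| with hCdef
  have hC0 : 0 ≤ C := by positivity
  -- derivative bounds from the adjoint equations
  have hbd : ∀ (lam : ℝ) (f f' : ℝ → ℂ),
      (∀ᵐ x ∂μr, Complex.I * f' x + (starRingEnd ℂ) (V x) * f x = (lam : ℂ) * f x) →
      |lam| ≤ |lam₁| + |lam₂| →
      ∀ᵐ x ∂μr, ‖f' x‖ ≤ C * ‖f x‖ := by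
    intro lam f f' hadj hlam
    filter_upwards [hadj, hM] with x h1 h2
    have h3 : f' x = (-Complex.I) * (((lam : ℂ) - (starRingEnd ℂ) (V x)) * f x) := by
      linear_combination (-Complex.I) * h1 + (f' x) * Complex.I_mul_I
    rw [h3]
    rw [norm_mul, norm_mul]
    have h4 : ‖(-Complex.I)‖ = 1 := by simp
    rw [h4, one_mul]
    apply mul_le_mul_of_nonneg_right _ (norm_nonneg _)
    calc ‖(lam : ℂ) - (starRingEnd ℂ) (V x)‖ ≤ ‖(lam:ℂ)‖ + ‖(starRingEnd ℂ) (V x)‖ :=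
          norm_sub_le _ _
      _ = |lam| + ‖V x‖ := by rw [RCLike.norm_conj]; simp
      _ ≤ C := by rw [hCdef]; linarith
  have hbd₁ : ∀ᵐ x ∂μr, ‖f₁' x‖ ≤ C * ‖f₁ x‖ :=
    hbd lam₁ f₁ f₁' hadj₁ (by linarith [abs_nonneg lam₂])
  have hbd₂ : ∀ᵐ x ∂μr, ‖f₂' x‖ ≤ C * ‖f₂ x‖ :=
    hbd lam₂ f₂ f₂' hadj₂ (by linarith [abs_nonneg lam₁])
  -- nonvanishing of eigenfunctions
  have hnv : ∀ (f f' : ℝ → ℂ), IsACWithDeriv f f' →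
      (∀ᵐ x ∂μr, ‖f' x‖ ≤ C * ‖f x‖) →
      (∃ x ∈ Set.Icc (0:ℝ) (2 * Real.pi), f x ≠ 0) →
      ∀ x ∈ Set.Icc (0:ℝ) (2 * Real.pi), f x ≠ 0 := by
    intro f f' hAC hb hnz x hx hzero
    obtain ⟨y, hy, hfy⟩ := hnz
    exact hfy (ode_zero hAC hC0 hb hx hzero y hy)
  have hnv₁ := hnv f₁ f₁' hAC₁ hbd₁ hnz₁
  have hnv₂ := hnv f₂ f₂' hAC₂ hbd₂ hnz₂
  have h2π : (2 * Real.pi) ∈ Set.Icc (0:ℝ) (2 * Real.pi) := Set.right_mem_Icc.2 hab2pi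
  -- the positive-measure set where the two eigenfunctions are proportional
  have hprop : ∀ᵐ x ∂μr, 0 < (V x).im →
      f₂ (2 * Real.pi) * f₁ x = f₁ (2 * Real.pi) * f₂ x := by
    filter_upwards [heq₁, hadj₁, heq₂, hadj₂] with x e1 a1 e2 a2 him
    have d1 : (V x - (starRingEnd ℂ) (V x)) * f₁ x + f₁ (2 * Real.pi) * k x = 0 := by
      linear_combination e1 - a1
    have d2 : (V x - (starRingEnd ℂ) (V x)) * f₂ x + f₂ (2 * Real.pi) * k x = 0 := by
      linear_combination e2 - a2
    have hVne : V x - (starRingEnd ℂ) (V x) ≠ 0 := by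
      intro h
      have : (V x - (starRingEnd ℂ) (V x)).im = 0 := by rw [h]; simp
      simp [Complex.sub_im, Complex.conj_im] at this
      linarith
    have : (V x - (starRingEnd ℂ) (V x)) *
        (f₂ (2 * Real.pi) * f₁ x - f₁ (2 * Real.pi) * f₂ x) = 0 := by
      linear_combination f₂ (2 * Real.pi) * d1 - f₁ (2 * Real.pi) * d2
    rcases mul_eq_zero.1 this with h | h
    · exact absurd h hVne
    · exact sub_eq_zero.1 h
  -- the set T of proportionality points
  set T : Set ℝ := {x | x ∈ Set.Ioo 0 (2 * Real.pi) ∧ 0 < (V x).im ∧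
    f₂ (2 * Real.pi) * f₁ x = f₁ (2 * Real.pi) * f₂ x} with hTdef
  have hTpos : 0 < MeasureTheory.volume T := by
    have hprop' : ∀ᵐ x ∂MeasureTheory.volume, x ∈ Set.Ioo 0 (2 * Real.pi) →
        (0 < (V x).im → f₂ (2 * Real.pi) * f₁ x = f₁ (2 * Real.pi) * f₂ x) :=
      MeasureTheory.ae_imp_of_ae_restrict hprop
    rw [MeasureTheory.ae_iff] at hprop'
    have hsub : {x | x ∈ Set.Ioo 0 (2 * Real.pi) ∧ 0 < (V x).im} ⊆
        T ∪ {x | ¬(x ∈ Set.Ioo 0 (2 * Real.pi) →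
          (0 < (V x).im → f₂ (2 * Real.pi) * f₁ x = f₁ (2 * Real.pi) * f₂ x))} := by
      intro x hx
      by_cases h : f₂ (2 * Real.pi) * f₁ x = f₁ (2 * Real.pi) * f₂ x
      · exact Or.inl ⟨hx.1, hx.2, h⟩
      · exact Or.inr (by intro h2; exact h (h2 hx.1 hx.2))
    have hle := le_trans (measure_mono hsub) (measure_union_le (μ := MeasureTheory.volume) _ _)
    rw [hprop', add_zero] at hle
    exact lt_of_lt_of_le hVIpos hle
  obtain ⟨x₀, hx₀T⟩ := MeasureTheory.nonempty_of_measure_ne_zero hTpos.ne'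
  have hx₀I : x₀ ∈ Set.Icc (0:ℝ) (2 * Real.pi) := Set.Ioo_subset_Icc_self hx₀T.1
  -- gauge functions
  set E₁ : ℝ → ℂ := fun x => Complex.exp (Complex.I * (lam₁:ℂ) * (x:ℝ)) with hE₁def
  set E₂ : ℝ → ℂ := fun x => Complex.exp (Complex.I * (lam₂:ℂ) * (x:ℝ)) with hE₂def
  have hACm := isAC_mul_exp hAC₁ (Complex.I * (lam₁:ℂ))
  have hACn := isAC_mul_exp hAC₂ (Complex.I * (lam₂:ℂ))
  set m₀ : ℂ := f₁ x₀ * E₁ x₀ with hm₀def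
  set n₀ : ℂ := f₂ x₀ * E₂ x₀ with hn₀def
  have hACw := isAC_smul_sub hACm hACn n₀ m₀
  -- derivative bound for w
  have hwbd : ∀ᵐ x ∂μr, ‖n₀ * (f₁' x * Complex.exp (Complex.I * (lam₁:ℂ) * (x:ℝ)) +
        f₁ x * (Complex.I * (lam₁:ℂ) * Complex.exp (Complex.I * (lam₁:ℂ) * (x:ℝ)))) -
      m₀ * (f₂' x * Complex.exp (Complex.I * (lam₂:ℂ) * (x:ℝ)) +
        f₂ x * (Complex.I * (lam₂:ℂ) * Complex.exp (Complex.I * (lam₂:ℂ) * (x:ℝ))))‖ ≤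
      M * ‖n₀ * (f₁ x * Complex.exp (Complex.I * (lam₁:ℂ) * (x:ℝ))) -
        m₀ * (f₂ x * Complex.exp (Complex.I * (lam₂:ℂ) * (x:ℝ)))‖ := by
    filter_upwards [hadj₁, hadj₂, hM] with x h1 h2 h3
    have hid : n₀ * (f₁' x * Complex.exp (Complex.I * (lam₁:ℂ) * (x:ℝ)) +
          f₁ x * (Complex.I * (lam₁:ℂ) * Complex.exp (Complex.I * (lam₁:ℂ) * (x:ℝ)))) -
        m₀ * (f₂' x * Complex.exp (Complex.I * (lam₂:ℂ) * (x:ℝ)) +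
          f₂ x * (Complex.I * (lam₂:ℂ) * Complex.exp (Complex.I * (lam₂:ℂ) * (x:ℝ)))) =
        Complex.I * (starRingEnd ℂ) (V x) *
          (n₀ * (f₁ x * Complex.exp (Complex.I * (lam₁:ℂ) * (x:ℝ))) -
           m₀ * (f₂ x * Complex.exp (Complex.I * (lam₂:ℂ) * (x:ℝ)))) := by
      linear_combination (-(Complex.I) * Complex.exp (Complex.I * (lam₁:ℂ) * (x:ℝ)) * n₀) * h1 +
        (Complex.I * Complex.exp (Complex.I * (lam₂:ℂ) * (x:ℝ)) * m₀) * h2 +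
        (n₀ * f₁' x * Complex.exp (Complex.I * (lam₁:ℂ) * (x:ℝ)) -
         m₀ * f₂' x * Complex.exp (Complex.I * (lam₂:ℂ) * (x:ℝ))) * Complex.I_mul_I
    rw [hid, norm_mul, norm_mul]
    have : ‖Complex.I‖ = 1 := by simp
    rw [this, one_mul, RCLike.norm_conj]
    exact mul_le_mul_of_nonneg_right h3 (norm_nonneg _)
  -- w vanishes at x₀ hence everywhere
  have hw0 : n₀ * (f₁ x₀ * Complex.exp (Complex.I * (lam₁:ℂ) * (x₀:ℝ))) -
      m₀ * (f₂ x₀ * Complex.exp (Complex.I * (lam₂:ℂ) * (x₀:ℝ))) = 0 := by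
    rw [hm₀def, hn₀def, hE₁def, hE₂def]
    ring
  have hwzero := ode_zero hACw hM0 hwbd hx₀I hw0
  -- nonvanishing facts
  have hf₁2π : f₁ (2 * Real.pi) ≠ 0 := hnv₁ _ h2π
  have hf₂2π : f₂ (2 * Real.pi) ≠ 0 := hnv₂ _ h2π
  have hn₀ : n₀ ≠ 0 := mul_ne_zero (hnv₂ _ hx₀I) (Complex.exp_ne_zero _)
  have hm₀ : m₀ ≠ 0 := mul_ne_zero (hnv₁ _ hx₀I) (Complex.exp_ne_zero _)
  -- T is contained in a countable set
  have hTsub : T ⊆ Set.range (fun j : ℤ => x₀ + 2 * Real.pi * j / (lam₁ - lam₂)) := by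
    intro x hxT
    have hxI : x ∈ Set.Icc (0:ℝ) (2 * Real.pi) := Set.Ioo_subset_Icc_self hxT.1
    have hw : n₀ * (f₁ x * E₁ x) = m₀ * (f₂ x * E₂ x) := by
      have := hwzero x hxI
      rw [hE₁def, hE₂def]
      exact sub_eq_zero.1 this
    have hp : f₂ (2 * Real.pi) * f₁ x = f₁ (2 * Real.pi) * f₂ x := hxT.2.2
    have hp₀ : f₂ (2 * Real.pi) * f₁ x₀ = f₁ (2 * Real.pi) * f₂ x₀ := hx₀T.2.2
    have hw₀ : n₀ * (f₁ x₀ * E₁ x₀) = m₀ * (f₂ x₀ * E₂ x₀) := by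
      rw [hm₀def, hn₀def]; ring
    have hstar : ∀ y : ℝ, y ∈ Set.Icc (0:ℝ) (2 * Real.pi) →
        f₂ (2 * Real.pi) * f₁ y = f₁ (2 * Real.pi) * f₂ y →
        n₀ * (f₁ y * E₁ y) = m₀ * (f₂ y * E₂ y) →
        n₀ * f₁ (2 * Real.pi) * E₁ y = f₂ (2 * Real.pi) * m₀ * E₂ y := by
      intro y hyI hpy hwy
      apply mul_right_cancel₀ (hnv₂ y hyI)
      linear_combination (-(n₀ * E₁ y)) * hpy + f₂ (2 * Real.pi) * hwy
    have hs := hstar x hxI hp hw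
    have hs₀ := hstar x₀ hx₀I hp₀ hw₀
    have hE : E₁ x * E₂ x₀ = E₂ x * E₁ x₀ := by
      have hA : n₀ * f₁ (2 * Real.pi) ≠ 0 := mul_ne_zero hn₀ hf₁2π
      apply mul_left_cancel₀ hA
      calc n₀ * f₁ (2 * Real.pi) * (E₁ x * E₂ x₀)
          = (n₀ * f₁ (2 * Real.pi) * E₁ x) * E₂ x₀ := by ring
        _ = (f₂ (2 * Real.pi) * m₀ * E₂ x) * E₂ x₀ := by rw [hs]
        _ = (f₂ (2 * Real.pi) * m₀ * E₂ x₀) * E₂ x := by ring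
        _ = (n₀ * f₁ (2 * Real.pi) * E₁ x₀) * E₂ x := by rw [hs₀]
        _ = n₀ * f₁ (2 * Real.pi) * (E₂ x * E₁ x₀) := by ring
    rw [hE₁def, hE₂def] at hE
    simp only [← Complex.exp_add] at hE
    rw [Complex.exp_eq_exp_iff_exists_int] at hE
    obtain ⟨j, hj⟩ := hE
    have hreal : lam₁ * x + lam₂ * x₀ = lam₂ * x + lam₁ * x₀ + j * (2 * Real.pi) := by
      have him := congrArg Complex.im hj
      simp only [Complex.add_im, Complex.mul_im, Complex.mul_re, Complex.I_re, Complex.I_im,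
        Complex.ofReal_re, Complex.ofReal_im, Complex.intCast_re, Complex.intCast_im,
        Complex.re_ofNat, Complex.im_ofNat] at him
      push_cast at him
      linarith [him]
    have hnd : lam₁ - lam₂ ≠ 0 := sub_ne_zero.2 hne
    refine ⟨j, ?_⟩
    show x₀ + 2 * Real.pi * (j:ℝ) / (lam₁ - lam₂) = x
    field_simp
    linarith [hreal]
  have : MeasureTheory.volume T = 0 :=
    measure_mono_null hTsub ((Set.countable_range _).measure_zero _)
  rw [this] at hTpos
  exact lt_irrefl _ hTpos
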